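/- Let S −a→ G ←b− T be functors of groupoids and let (a/b) be the iso-comma groupoid with projections p : (a/b) → S, q : (a/b) → T. Then the Beck–Chevalley map is an isomorphism of bisets: for all objects s ∈ S, t ∈ T, the map ∫^{i∈(a/b)} T(qi, t) × S(s, pi) → ∫^{g∈G} G(g, bt) × G(as, g) sending [τ, σ]_i to [b(τ)∘γ_i∘a(σ), id]_{as} (where i = (x, y, γ_i : ax → by)) is a bijection, natural in (s, t). -/

import Mathlib

/-!
Statement 17 (Beck–Chevalley for iso-comma squares of groupoids): for functors
`a : S ⥤ G` and `b : T ⥤ G` between groupoids, with iso-comma groupoid `(a/b)` (for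
groupoids this is the comma category `Comma a b`) and projections `p = Comma.fst`,
`q = Comma.snd`, the Beck–Chevalley map of bisets is an isomorphism: for all `s : S`,
`t : T` the map
`∫^{i ∈ (a/b)} T(q i, t) × S(s, p i) ⟶ ∫^{g ∈ G} G(g, b t) × G(a s, g)`
sending `[τ, σ]_i` to `[b(τ) ∘ γ_i ∘ a(σ), 𝟙]_{a s}` is a bijection, natural in `(s, t)`.
-/

open CategoryTheory

universe u₁

namespace BeckChevalley

variable {S T G : Type u₁} [Groupoid.{u₁} S] [Groupoid.{u₁} T] [Groupoid.{u₁} G]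
variable (a : S ⥤ G) (b : T ⥤ G)

/-- Representatives of the coend `∫^{i ∈ (a/b)} T(q i, t) × S(s, p i)`, which computes the
composite biset `R_!(q) ∘ R*(p)` at `(s, t)`. -/
def SrcCarrier (s : S) (t : T) : Type u₁ :=
  Σ i : Comma a b, (i.right ⟶ t) × (s ⟶ i.left)

/-- The coend relation on the source. -/
def srcRel (s : S) (t : T) : SrcCarrier a b s t → SrcCarrier a b s t → Prop := fun x y =>
  ∃ (α : y.1 ⟶ x.1) (τ : x.1.right ⟶ t) (σ : s ⟶ y.1.left),
    x.2 = (τ, σ ≫ α.left) ∧ y.2 = (α.right ≫ τ, σ)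

/-- The coend `∫^{i ∈ (a/b)} T(q i, t) × S(s, p i)`. -/
def Src (s : S) (t : T) : Type u₁ := Quot (srcRel a b s t)

/-- Representatives of the coend `∫^{g ∈ G} G(g, b t) × G(a s, g)`, which computes the
composite biset `R*(b) ∘ R_!(a)` at `(s, t)`. -/
def TgtCarrier (s : S) (t : T) : Type u₁ :=
  Σ g : G, (g ⟶ b.obj t) × (a.obj s ⟶ g)

/-- The coend relation on the target. -/
def tgtRel (s : S) (t : T) : TgtCarrier a b s t → TgtCarrier a b s t → Prop := fun x y =>
  ∃ (α : y.1 ⟶ x.1) (ζ : x.1 ⟶ b.obj t) (ξ : a.obj s ⟶ y.1),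
    x.2 = (ζ, ξ ≫ α) ∧ y.2 = (α ≫ ζ, ξ)

/-- The coend `∫^{g ∈ G} G(g, b t) × G(a s, g)`. -/
def Tgt (s : S) (t : T) : Type u₁ := Quot (tgtRel a b s t)

/-- Forward map on representatives. -/
def fwdAux (s : S) (t : T) : SrcCarrier a b s t → Tgt a b s t := fun x =>
  Quot.mk _ ⟨a.obj s, (a.map x.2.2 ≫ x.1.hom ≫ b.map x.2.1, 𝟙 (a.obj s))⟩

/-- Inverse map on representatives. -/
def invAux (s : S) (t : T) : TgtCarrier a b s t → Src a b s t := fun x =>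
  Quot.mk _ ⟨Comma.mk (L := a) (R := b) (hom := x.2.2 ≫ x.2.1), (𝟙 t, 𝟙 s)⟩

theorem fwdAux_sound (s : S) (t : T) (x y : SrcCarrier a b s t) (h : srcRel a b s t x y) :
    fwdAux a b s t x = fwdAux a b s t y := by
  obtain ⟨α, τ, σ, hx, hy⟩ := h
  have w : a.map α.left ≫ x.1.hom ≫ b.map τ = y.1.hom ≫ b.map α.right ≫ b.map τ := by
    rw [← Category.assoc, α.w, Category.assoc]
  simp only [fwdAux, hx, hy, Functor.map_comp, Category.assoc, w]
  rfl

theorem invAux_sound (s : S) (t : T) (x y : TgtCarrier a b s t) (h : tgtRel a b s t x y) :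
    invAux a b s t x = invAux a b s t y := by
  obtain ⟨α, ζ, ξ, hx, hy⟩ := h
  simp only [invAux]
  rw [hx, hy, Category.assoc]

/-- The key relation: every source representative is related to its "normal form". -/
theorem src_rel_normal (s : S) (t : T) (i : Comma a b) (τ : i.right ⟶ t) (σ : s ⟶ i.left) :
    Quot.mk (srcRel a b s t) ⟨i, (τ, σ)⟩ =
    Quot.mk (srcRel a b s t)
      ⟨Comma.mk (L := a) (R := b) (hom := a.map σ ≫ i.hom ≫ b.map τ), (𝟙 t, 𝟙 s)⟩ := by
  apply Quot.sound
  refine ⟨⟨σ, Groupoid.inv τ, ?_⟩, τ, 𝟙 s, ?_, ?_⟩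
  · simp
  · simp
  · simp

theorem tgt_rel_normal (s : S) (t : T) (g : G) (ζ : g ⟶ b.obj t) (ξ : a.obj s ⟶ g) :
    Quot.mk (tgtRel a b s t) ⟨a.obj s, (ξ ≫ ζ, 𝟙 (a.obj s))⟩ =
    Quot.mk (tgtRel a b s t) ⟨g, (ζ, ξ)⟩ := by
  apply Quot.sound
  exact ⟨Groupoid.inv ξ, ξ ≫ ζ, ξ, by simp, by simp⟩

/-- **Beck–Chevalley.**  The map `[τ, σ]_i ↦ [b(τ) ∘ γ_i ∘ a(σ), 𝟙]_{a s}` is a bijection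
`∫^{i} T(q i, t) × S(s, p i) ≃ ∫^{g} G(g, b t) × G(a s, g)`, natural in `(s, t)` (the
formula below, valid for all `s`, `t` and all representatives, expresses this
naturality). -/
theorem beck_chevalley_iso :
    ∃ e : ∀ (s : S) (t : T), Src a b s t ≃ Tgt a b s t,
      ∀ (s : S) (t : T) (i : Comma a b) (τ : i.right ⟶ t) (σ : s ⟶ i.left),
        e s t (Quot.mk _ ⟨i, (τ, σ)⟩) =
          Quot.mk _ ⟨a.obj s, (a.map σ ≫ i.hom ≫ b.map τ, 𝟙 (a.obj s))⟩ := by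
  refine ⟨fun s t =>
    { toFun := Quot.lift (fwdAux a b s t) (fwdAux_sound a b s t)
      invFun := Quot.lift (invAux a b s t) (invAux_sound a b s t)
      left_inv := ?_
      right_inv := ?_ }, fun s t i τ σ => rfl⟩
  · intro x
    induction x using Quot.ind with
    | _ x =>
      obtain ⟨i, τ, σ⟩ := x
      show Quot.mk (srcRel a b s t) ⟨Comma.mk (L := a) (R := b)
        (hom := 𝟙 (a.obj s) ≫ a.map σ ≫ i.hom ≫ b.map τ), (𝟙 t, 𝟙 s)⟩ =
          Quot.mk (srcRel a b s t) ⟨i, (τ, σ)⟩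
      rw [Category.id_comp]
      exact (src_rel_normal a b s t i τ σ).symm
  · intro x
    induction x using Quot.ind with
    | _ x =>
      obtain ⟨g, ζ, ξ⟩ := x
      show Quot.mk (tgtRel a b s t) ⟨a.obj s, (a.map (𝟙 s) ≫ (ξ ≫ ζ) ≫ b.map (𝟙 t), 𝟙 (a.obj s))⟩ =
        Quot.mk (tgtRel a b s t) ⟨g, (ζ, ξ)⟩
      rw [a.map_id, b.map_id, Category.id_comp, Category.comp_id]
      exact tgt_rel_normal a b s t g ζ ξ

end BeckChevalley
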